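/- There exists a single-peaked preference profile over 4 candidates (3 voters with a ≻ b ≻ c ≻ d and 2 voters with c ≻ d ≻ b ≻ a, single-peaked on the axis a ▷ b ▷ c ▷ d) such that no ranking of the candidates in non-increasing order of Borda score is single-peaked with respect to that axis: the Borda scores are B(a)=9, B(b)=8, B(c)=9, B(d)=4, and both resulting rankings (c ≻ a ≻ b ≻ d and a ≻ c ≻ b ≻ d) violate single-peakedness. -/
import Mathlib


open Finset

/-- A ranking over `m` candidates: `r c` is the position of candidate `c`
(position `0` = most preferred). -/
abbrev Ranking (m : ℕ) := Equiv.Perm (Fin m)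

/-- Voter with ranking `r` prefers `a` to `b`. -/
def Prefers {m : ℕ} (r : Ranking m) (a b : Fin m) : Prop := r a < r b

/-- A ranking is single-peaked w.r.t. the axis `c_0 ▷ c_1 ▷ ... ▷ c_{m-1}`. -/
def IsSinglePeaked {m : ℕ} (r : Ranking m) : Prop :=
  ∀ i j k : Fin m, i < j → j < k →
    (Prefers r i j → Prefers r j k) ∧ (Prefers r k j → Prefers r j i)

/-- A profile is single-peaked if all its rankings are. -/
def SPProfile {V : Type*} {m : ℕ} (P : V → Ranking m) : Prop :=
  ∀ v, IsSinglePeaked (P v)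

/-- Popularity margin of `a` over `b`. -/
noncomputable def pop {V : Type*} [Fintype V] {m : ℕ} (P : V → Ranking m)
    (a b : Fin m) : ℤ :=
  (Nat.card {v : V // Prefers (P v) a b} : ℤ) -
    (Nat.card {v : V // Prefers (P v) b a} : ℤ)

/-- Minimax Condorcet score of candidate `c`: worst defeat margin. -/
noncomputable def mmc {V : Type*} [Fintype V] {m : ℕ} (P : V → Ranking m)
    (c : Fin m) : WithBot ℤ :=
  (Finset.univ.erase c).sup (fun c' => ((pop P c' c : ℤ) : WithBot ℤ))

/-- Kendall's tau distance between two rankings. -/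
noncomputable def kt {m : ℕ} (r s : Ranking m) : ℕ :=
  Nat.card {p : Fin m × Fin m //
    p.1 < p.2 ∧ ¬ (Prefers r p.1 p.2 ↔ Prefers s p.1 p.2)}

/-- Kemeny score of ranking `r` w.r.t. profile `P`. -/
noncomputable def ktSum {V : Type*} [Fintype V] {m : ℕ} (r : Ranking m)
    (P : V → Ranking m) : ℕ :=
  ∑ v, kt r (P v)

/-- The peak (top candidate) of a ranking. -/
def peak {m : ℕ} (r : Ranking (m + 1)) : Fin (m + 1) := r.symm 0

/-- Borda score: sum over voters of the number of candidates ranked below. -/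
noncomputable def borda {V : Type*} [Fintype V] {m : ℕ} (P : V → Ranking m)
    (x : Fin m) : ℕ :=
  ∑ v, (m - 1 - ((P v) x : ℕ))

/-- The ranking c ≻ d ≻ b ≻ a over candidates a = 0, b = 1, c = 2, d = 3. -/
def cdba : Ranking 4 := ⟨![3, 2, 0, 1], ![2, 3, 1, 0], by decide, by decide⟩

/-- The profile of three voters with a ≻ b ≻ c ≻ d and two voters with
c ≻ d ≻ b ≻ a. -/
def P19 : Fin 5 → Ranking 4 :=
  ![Equiv.refl (Fin 4), Equiv.refl (Fin 4), Equiv.refl (Fin 4), cdba, cdba]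

/-- this profile is single-peaked on the axis a ▷ b ▷ c ▷ d, has
Borda scores 9, 8, 9, 4, and no ranking of the candidates in non-increasing
order of Borda score is single-peaked w.r.t. the axis. -/
theorem stmt_19 :
    SPProfile P19 ∧
    borda P19 0 = 9 ∧ borda P19 1 = 8 ∧ borda P19 2 = 9 ∧ borda P19 3 = 4 ∧
    ∀ r : Ranking 4,
      (∀ a b : Fin 4, r a ≤ r b → borda P19 b ≤ borda P19 a) →
      ¬ IsSinglePeaked r := by
  have hb : borda P19 0 = 9 ∧ borda P19 1 = 8 ∧ borda P19 2 = 9 ∧ borda P19 3 = 4 := by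
    refine ⟨?_, ?_, ?_, ?_⟩ <;>
      simp [borda, P19, cdba, Fin.sum_univ_five, Equiv.coe_fn_mk] <;> rfl
  obtain ⟨h0, h1, h2, h3⟩ := hb
  refine ⟨fun v => by fin_cases v <;> (intro i j k hij hjk; fin_cases i <;> fin_cases j <;> fin_cases k <;> simp_all [Prefers, P19, cdba]), h0, h1, h2, h3, ?_⟩
  intro r hr hsp
  have key : ∀ a b : Fin 4, r a ≤ r b → borda P19 b ≤ borda P19 a := hr
  have h31 : r 3 > r 1 := by
    by_contra h
    have := key 3 1 (le_of_not_gt (by omega))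
    omega
  have h10 : r 1 > r 0 := by
    by_contra h
    have := key 1 0 (le_of_not_gt (by omega))
    omega
  have h12 : r 1 > r 2 := by
    by_contra h
    have := key 1 2 (le_of_not_gt (by omega))
    omega
  have := (hsp 0 1 2 (by decide) (by decide)).2 h12
  simp only [Prefers] at this
  omega
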